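/- Let M be an integral (cancellative) commutative monoid and P' ⊆ M a submonoid. Let h : Q → M be a monoid homomorphism from an integral monoid Q satisfying the integrality condition: whenever q₁, q₂ ∈ Q and a₁, a₂ ∈ M satisfy h(q₁)a₁ = h(q₂)a₂, there exist q₃, q₄ ∈ Q and a ∈ M with a₁ = h(q₃)a, a₂ = h(q₄)a, and q₁q₃ = q₂q₄. Then the induced homomorphism between the integral monoid quotients Q/h⁻¹(P') → M/P' satisfies the same condition. -/
import Mathlib


/-!
STATEMENT 0 (Kato's integrality criterion, condition (iv), passes to integral
monoid quotients).

For a commutative monoid `M`, "integral" means cancellative (the canonical map to the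
group completion is injective).  For a submonoid `P' ⊆ M`, the integral monoid quotient
`M/P'` (the image of `M` in `M^gp/(P')^gp`) is the quotient of `M` by the congruence
`x ~ y ↔ ∃ p p' ∈ P', x * p = y * p'`.
-/

/-- Condition (iv) of Kato's criterion for a monoid homomorphism `h : Q → M`. -/
def KatoCondIV {Q M : Type*} [CommMonoid Q] [CommMonoid M] (h : Q →* M) : Prop :=
  ∀ q₁ q₂ : Q, ∀ a₁ a₂ : M, h q₁ * a₁ = h q₂ * a₂ →
    ∃ q₃ q₄ : Q, ∃ a : M, a₁ = h q₃ * a ∧ a₂ = h q₄ * a ∧ q₁ * q₃ = q₂ * q₄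

/-- The congruence on `M` whose quotient is the integral monoid quotient `M/P'`
(for `M` cancellative this is the image of `M` in `M^gp/(P')^gp`). -/
def quotIntCon (M : Type*) [CommMonoid M] (P : Submonoid M) : Con M where
  r x y := ∃ p ∈ P, ∃ p' ∈ P, x * p = y * p'
  iseqv := by
    constructor
    · exact fun x => ⟨1, P.one_mem, 1, P.one_mem, rfl⟩
    · rintro x y ⟨p, hp, p', hp', e⟩; exact ⟨p', hp', p, hp, e.symm⟩
    · rintro x y z ⟨p, hp, p', hp', e⟩ ⟨q, hq, q', hq', e'⟩
      refine ⟨p * q, P.mul_mem hp hq, q' * p', P.mul_mem hq' hp', ?_⟩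
      calc x * (p * q) = (x * p) * q := by rw [mul_assoc]
        _ = (y * p') * q := by rw [e]
        _ = (y * q) * p' := by rw [mul_assoc, mul_comm p' q, ← mul_assoc]
        _ = (z * q') * p' := by rw [e']
        _ = z * (q' * p') := by rw [mul_assoc]
  mul' := by
    rintro w x y z ⟨p, hp, p', hp', e⟩ ⟨q, hq, q', hq', e'⟩
    refine ⟨p * q, P.mul_mem hp hq, p' * q', P.mul_mem hp' hq', ?_⟩
    calc w * y * (p * q) = (w * p) * (y * q) := mul_mul_mul_comm w y p q
      _ = (x * p') * (z * q') := by rw [e, e']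
      _ = x * z * (p' * q') := (mul_mul_mul_comm x z p' q').symm

/-- The homomorphism `Q/h⁻¹(P') → M/P'` induced by `h : Q → M`. -/
def inducedQuotHom {Q M : Type*} [CommMonoid Q] [CommMonoid M] (h : Q →* M)
    (P : Submonoid M) :
    (quotIntCon Q (P.comap h)).Quotient →* (quotIntCon M P).Quotient :=
  Con.lift _ ((quotIntCon M P).mk'.comp h) (by
    rintro x y ⟨p, hp, p', hp', e⟩
    have hr : (quotIntCon M P) (h x) (h y) :=
      ⟨h p, hp, h p', hp', by rw [← map_mul, ← map_mul, e]⟩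
    simpa [Con.ker_rel] using ((quotIntCon M P).eq.mpr hr))

/-- If `M` and `Q` are integral (cancellative) commutative monoids, `P' ⊆ M` a submonoid,
and `h : Q → M` satisfies Kato's condition (iv), then the induced homomorphism between
the integral monoid quotients `Q/h⁻¹(P') → M/P'` satisfies the same condition. -/
theorem katoCondIV_quotient {Q M : Type*} [CancelCommMonoid Q] [CancelCommMonoid M]
    (P' : Submonoid M) (h : Q →* M) (hKato : KatoCondIV h) :
    KatoCondIV (inducedQuotHom h P') := by

  intro q₁' q₂' a₁' a₂' he
  obtain ⟨q₁, rfl⟩ := Con.mk'_surjective q₁'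
  obtain ⟨q₂, rfl⟩ := Con.mk'_surjective q₂'
  obtain ⟨a₁, rfl⟩ := Con.mk'_surjective a₁'
  obtain ⟨a₂, rfl⟩ := Con.mk'_surjective a₂'
  have he' : (quotIntCon M P') (h q₁ * a₁) (h q₂ * a₂) := by
    rw [← Con.eq]
    simpa [inducedQuotHom, ← map_mul] using he
  obtain ⟨p, hp, p', hp', e⟩ := he'
  have e2 : h q₁ * (a₁ * p) = h q₂ * (a₂ * p') := by
    rw [← mul_assoc, ← mul_assoc, e]
  obtain ⟨q₃, q₄, a, e₁, e₂, e₃⟩ := hKato q₁ q₂ (a₁ * p) (a₂ * p') e2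
  refine ⟨(quotIntCon Q (P'.comap h)).mk' q₃, (quotIntCon Q (P'.comap h)).mk' q₄,
    (quotIntCon M P').mk' a, ?_, ?_, ?_⟩
  · show _ = inducedQuotHom h P' _ * _
    simp only [inducedQuotHom, Con.lift_mk', MonoidHom.comp_apply, ← map_mul]
    exact (quotIntCon M P').eq.mpr ⟨p, hp, 1, P'.one_mem, by rw [e₁, mul_one]⟩
  · show _ = inducedQuotHom h P' _ * _
    simp only [inducedQuotHom, Con.lift_mk', MonoidHom.comp_apply, ← map_mul]
    exact (quotIntCon M P').eq.mpr ⟨p', hp', 1, P'.one_mem, by rw [e₂, mul_one]⟩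
  · rw [← map_mul, ← map_mul, e₃]
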